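/- Let 0 < α < 1, γ > 0 and n ≥ 1. Then the coefficients t_n satisfy the mixed difference equation t_n(α, γ) = t_{n−1}(α, γ) − (1−α)^{−1} (1 + γ^{−1})^{n−1} t_{n−1}(α, γ+1). Equivalently, setting t̃_n(α,γ) := γ^n t_n(α,γ), one has t̃_n(α,γ) = γ t̃_{n−1}(α,γ) − γ(1−α)^{−1} t̃_{n−1}(α, γ+1). -/

import Mathlib

/-- Pochhammer symbol `(γ)_l = γ(γ+1)⋯(γ+l−1)`. -/
noncomputable def poch (γ : ℝ) (l : ℕ) : ℝ := ∏ i ∈ Finset.range l, (γ + i)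

/-- Stirling numbers of the second kind. -/
def stirling2 : ℕ → ℕ → ℕ
  | 0, 0 => 1
  | 0, _+1 => 0
  | _+1, 0 => 0
  | n+1, k+1 => (k+1) * stirling2 n (k+1) + stirling2 n k

/-- `t_n(α,γ) = (−1)^n γ^{−n} ∑_{i=0}^n S(n,i) (γ)_i (α/(1−α))^i`. -/
noncomputable def tcoef (α γ : ℝ) (n : ℕ) : ℝ :=
  (-1)^n * (γ^n)⁻¹ *
    ∑ i ∈ Finset.range (n+1), (stirling2 n i : ℝ) * poch γ i * (α/(1-α))^i

/-- `S(m,j) = 0` for `j > m`. -/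
lemma stirling2_eq_zero : ∀ {m j : ℕ}, m < j → stirling2 m j = 0 := by
  intro m
  induction m with
  | zero => intro j h; match j, h with | k+1, _ => rfl
  | succ m ih =>
    intro j h
    match j, h with
    | k+1, h =>
      have h1 : m < k := Nat.lt_of_succ_lt_succ h
      show (k+1) * stirling2 m (k+1) + stirling2 m k = 0
      rw [ih (Nat.lt_succ_of_lt h1), ih h1]; simp

lemma poch_succ (γ : ℝ) (k : ℕ) : poch γ (k+1) = poch γ k * (γ + k) :=
  Finset.prod_range_succ _ _

lemma poch_succ' (γ : ℝ) (k : ℕ) : γ * poch (γ+1) k = poch γ (k+1) := by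
  unfold poch
  rw [Finset.prod_range_succ']
  simp only [Nat.cast_zero, add_zero]
  rw [mul_comm]
  congr 1
  apply Finset.prod_congr rfl
  intro i _
  push_cast
  ring

/-- The key polynomial identity behind the mixed difference equation. -/
lemma key (γ x : ℝ) (m : ℕ) :
    ∑ i ∈ Finset.range (m+2), (stirling2 (m+1) i : ℝ) * poch γ i * x^i
    = γ*(1+x) * (∑ i ∈ Finset.range (m+1), (stirling2 m i : ℝ) * poch (γ+1) i * x^i)
      - γ * ∑ i ∈ Finset.range (m+1), (stirling2 m i : ℝ) * poch γ i * x^i := by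
  rw [Finset.sum_range_succ']
  have h0 : (stirling2 (m+1) 0 : ℝ) * poch γ 0 * x^0 = 0 := by
    show ((0:ℕ) : ℝ) * poch γ 0 * x ^ 0 = 0
    simp
  rw [h0, add_zero]
  have expand : ∀ k ∈ Finset.range (m+1),
      (stirling2 (m+1) (k+1) : ℝ) * poch γ (k+1) * x^(k+1)
      = ((k+1:ℕ):ℝ) * stirling2 m (k+1) * poch γ (k+1) * x^(k+1)
        + (stirling2 m k : ℝ) * poch γ (k+1) * x^(k+1) := by
    intro k _
    have : stirling2 (m+1) (k+1) = (k+1) * stirling2 m (k+1) + stirling2 m k := rfl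
    rw [this]; push_cast; ring
  rw [Finset.sum_congr rfl expand, Finset.sum_add_distrib]
  have hA : ∑ k ∈ Finset.range (m+1), ((k+1:ℕ):ℝ) * stirling2 m (k+1) * poch γ (k+1) * x^(k+1)
      = ∑ k ∈ Finset.range (m+1), (k:ℝ) * stirling2 m k * poch γ k * x^k := by
    have h1 := Finset.sum_range_succ' (fun j : ℕ => (j:ℝ) * stirling2 m j * poch γ j * x^j) (m+1)
    have h2 := Finset.sum_range_succ (fun j : ℕ => (j:ℝ) * stirling2 m j * poch γ j * x^j) (m+1)
    simp only [Nat.cast_zero, zero_mul, add_zero, stirling2_eq_zero (Nat.lt_succ_self m),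
      mul_zero, zero_mul] at h1 h2
    rw [h1] at h2
    linarith [h2]
  rw [hA, Finset.mul_sum, Finset.mul_sum, ← Finset.sum_sub_distrib, ← Finset.sum_add_distrib]
  apply Finset.sum_congr rfl
  intro k _
  have h := poch_succ' γ k
  rw [poch_succ] at h ⊢
  linear_combination (-((stirling2 m k : ℝ) * x^k * (1+x))) * h

/-- For `0 < α < 1`, `γ > 0`, `n ≥ 1`:
`t_n(α,γ) = t_{n−1}(α,γ) − (1−α)^{−1}(1+γ^{−1})^{n−1} t_{n−1}(α,γ+1)`; equivalently, with
`t̃_n(α,γ) = γ^n t_n(α,γ)`, `t̃_n(α,γ) = γ t̃_{n−1}(α,γ) − γ(1−α)^{−1} t̃_{n−1}(α,γ+1)`. -/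
theorem tcoef_mixed_difference (α γ : ℝ) (hα0 : 0 < α) (hα1 : α < 1) (hγ : 0 < γ)
    (n : ℕ) (hn : 1 ≤ n) :
    tcoef α γ n = tcoef α γ (n-1)
      - (1 - α)⁻¹ * (1 + γ⁻¹)^(n-1) * tcoef α (γ+1) (n-1) ∧
    γ^n * tcoef α γ n = γ * (γ^(n-1) * tcoef α γ (n-1))
      - γ * (1 - α)⁻¹ * ((γ+1)^(n-1) * tcoef α (γ+1) (n-1)) := by
  obtain ⟨m, rfl⟩ : ∃ m, n = m + 1 := ⟨n - 1, (Nat.succ_pred_eq_of_pos hn).symm⟩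
  have hm : m + 1 - 1 = m := rfl
  have hγ' : γ ≠ 0 := ne_of_gt hγ
  have hγ1 : γ + 1 ≠ 0 := by positivity
  have h1α : (1:ℝ) - α ≠ 0 := by linarith
  have h1x : 1 + α/(1-α) = (1-α)⁻¹ := by field_simp; ring
  have hk := key γ (α/(1-α)) m
  rw [h1x] at hk
  have h2 : γ^(m+1) * tcoef α γ (m+1) = γ * (γ^(m+1-1) * tcoef α γ (m+1-1))
      - γ * (1 - α)⁻¹ * ((γ+1)^(m+1-1) * tcoef α (γ+1) (m+1-1)) := by
    rw [hm]
    simp only [tcoef]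
    rw [show m + 1 + 1 = m + 2 from rfl, hk]
    field_simp
    ring
  refine ⟨?_, h2⟩
  rw [hm] at h2 ⊢
  have hinv : (1 + γ⁻¹) = (γ+1) * γ⁻¹ := by field_simp
  rw [hinv, mul_pow]
  have hpow : (γ:ℝ)^(m+1) ≠ 0 := pow_ne_zero _ hγ'
  have := congrArg (fun y => (γ^(m+1))⁻¹ * y) h2
  rw [inv_mul_cancel_left₀ hpow] at this
  rw [this]
  rw [inv_pow]
  field_simp
  ring
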